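/- arXiv:1706.08955 — 2 statements merged into one kernel-verified Lean document; each statement's English description precedes it below -/
import Mathlib

section
/- There exists a primitive isometric embedding j of T := U(2) ⊕ D₄(−1) into L := U^{⊕3} ⊕ E₈(−1)^{⊕2} ⊕ ⟨−2⟩ such that every primitive vector v of the image j(T) has divisibility 1 in L, i.e. the ideal {⟨v,w⟩ : w ∈ L} ⊆ ℤ equals ℤ. -/
open Matrix

/-- The bilinear form of the lattice `ℤⁿ` with Gram matrix `G`. -/
def bform {n : ℕ} (G : Matrix (Fin n) (Fin n) ℤ) (v w : Fin n → ℤ) : ℤ :=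
  v ⬝ᵥ G.mulVec w

/-- Gram matrix of the hyperbolic plane `U`. -/
def UMat : Matrix (Fin 2) (Fin 2) ℤ := !![0, 1; 1, 0]

/-- Gram matrix of the root lattice `E₈` (the `E₈` Cartan matrix). -/
def E8Mat : Matrix (Fin 8) (Fin 8) ℤ := CartanMatrix.E₈

/-- Gram matrix of the root lattice `D₄` (the `D₄` Cartan matrix). -/
def D4Mat : Matrix (Fin 4) (Fin 4) ℤ :=
  !![ 2, -1,  0,  0;
     -1,  2, -1, -1;
      0, -1,  2,  0;
      0, -1,  0,  2]

/-- Orthogonal direct sum of two Gram matrices. -/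
def dsum {m n : ℕ} (G : Matrix (Fin m) (Fin m) ℤ) (H : Matrix (Fin n) (Fin n) ℤ) :
    Matrix (Fin (m + n)) (Fin (m + n)) ℤ :=
  Matrix.reindex finSumFinEquiv finSumFinEquiv (Matrix.fromBlocks G 0 0 H)

/-- Gram matrix of `L = U³ ⊕ E₈(-1)² ⊕ ⟨-2⟩`, the Beauville–Bogomolov–Fujiki
lattice of manifolds of `K3^[2]`-type. -/
def LMat : Matrix (Fin 23) (Fin 23) ℤ :=
  dsum (dsum (dsum UMat (dsum UMat UMat)) (dsum (-E8Mat) (-E8Mat))) !![-2]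

/-- Gram matrix of `U(2) ⊕ E₈(-2)`. -/
def T1Mat : Matrix (Fin 10) (Fin 10) ℤ := dsum ((2 : ℤ) • UMat) ((-2 : ℤ) • E8Mat)

/-- Gram matrix of `U ⊕ E₈(-2)`. -/
def T2Mat : Matrix (Fin 10) (Fin 10) ℤ := dsum UMat ((-2 : ℤ) • E8Mat)

/-- Gram matrix of `U(2) ⊕ D₄(-1)`. -/
def T3Mat : Matrix (Fin 6) (Fin 6) ℤ := dsum ((2 : ℤ) • UMat) (-D4Mat)

/-- `F` (viewed as the linear map `v ↦ F *ᵥ v` from `ℤᵐ` to `ℤᴺ`) is a primitive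
isometric embedding of the lattice with Gram matrix `G` into the lattice with
Gram matrix `H`: it is injective, preserves the bilinear forms, and its image is
a primitive sublattice (the quotient by the image is torsion-free). -/
def IsPrimitiveIsometricEmb {m N : ℕ} (G : Matrix (Fin m) (Fin m) ℤ)
    (H : Matrix (Fin N) (Fin N) ℤ) (F : Matrix (Fin N) (Fin m) ℤ) : Prop :=
  Function.Injective F.mulVec ∧
  (∀ v w : Fin m → ℤ, bform H (F *ᵥ v) (F *ᵥ w) = bform G v w) ∧
  (∀ (x : Fin N → ℤ) (c : ℤ), c ≠ 0 → (∃ v, c • x = F *ᵥ v) → ∃ v, x = F *ᵥ v)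

def FTmat : Matrix (Fin 6) (Fin 23) ℤ :=
  !![1, 0, 1, 0, 0, 0, 0, 0, 0, 0, 0, 0, 0, 0, 0, 0, 0, 0, 0, 0, 0, 0, 0;
   0, 1, 0, 1, 0, 0, 0, 0, 0, 0, 0, 0, 0, 0, 0, 0, 0, 0, 0, 0, 0, 0, 0;
   0, 0, 0, 0, 0, 0, 0, 1, 0, 0, 0, 0, 0, 0, 0, 0, 0, 0, 0, 0, 0, 0, 0;
   0, 0, 0, 0, 0, 0, 0, 0, 0, 1, 0, 0, 0, 0, 0, 0, 0, 0, 0, 0, 0, 0, 0;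
   0, 0, 0, 0, 0, 0, 0, 0, 1, 0, 0, 0, 0, 0, 0, 0, 0, 0, 0, 0, 0, 0, 0;
   0, 0, 0, 0, 0, 0, 0, 0, 0, 0, 1, 0, 0, 0, 0, 0, 0, 0, 0, 0, 0, 0, 0]

def Pmat : Matrix (Fin 6) (Fin 23) ℤ :=
  !![1, 0, 0, 0, 0, 0, 0, 0, 0, 0, 0, 0, 0, 0, 0, 0, 0, 0, 0, 0, 0, 0, 0;
   0, 1, 0, 0, 0, 0, 0, 0, 0, 0, 0, 0, 0, 0, 0, 0, 0, 0, 0, 0, 0, 0, 0;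
   0, 0, 0, 0, 0, 0, 0, 1, 0, 0, 0, 0, 0, 0, 0, 0, 0, 0, 0, 0, 0, 0, 0;
   0, 0, 0, 0, 0, 0, 0, 0, 0, 1, 0, 0, 0, 0, 0, 0, 0, 0, 0, 0, 0, 0, 0;
   0, 0, 0, 0, 0, 0, 0, 0, 1, 0, 0, 0, 0, 0, 0, 0, 0, 0, 0, 0, 0, 0, 0;
   0, 0, 0, 0, 0, 0, 0, 0, 0, 0, 1, 0, 0, 0, 0, 0, 0, 0, 0, 0, 0, 0, 0]

def RTmat : Matrix (Fin 6) (Fin 23) ℤ :=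
  !![0, 1, 0, 0, 0, 0, 0, 0, 0, 0, 0, 0, 0, 0, 0, 0, 0, 0, 0, 0, 0, 0, 0;
   1, 0, 0, 0, 0, 0, 0, 0, 0, 0, 0, 0, 0, 0, 0, 0, 0, 0, 0, 0, 0, 0, 0;
   0, 0, 0, 0, 0, 0, -5, -8, -10, -15, -12, -9, -6, -3, 0, 0, 0, 0, 0, 0, 0, 0, 0;
   0, 0, 0, 0, 0, 0, -10, -15, -20, -30, -24, -18, -12, -6, 0, 0, 0, 0, 0, 0, 0, 0, 0;
   0, 0, 0, 0, 0, 0, -7, -10, -14, -20, -16, -12, -8, -4, 0, 0, 0, 0, 0, 0, 0, 0, 0;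
   0, 0, 0, 0, 0, 0, -8, -12, -16, -24, -20, -15, -10, -5, 0, 0, 0, 0, 0, 0, 0, 0, 0]

lemma dot_trans {m n : ℕ} (F : Matrix (Fin n) (Fin m) ℤ) (v : Fin m → ℤ) (u : Fin n → ℤ) :
    (F *ᵥ v) ⬝ᵥ u = v ⬝ᵥ (Fᵀ *ᵥ u) := by
  rw [dotProduct_comm, Matrix.dotProduct_mulVec, Matrix.mulVec_transpose,
    dotProduct_comm]

lemma bform_mul {m n : ℕ} (H : Matrix (Fin n) (Fin n) ℤ) (F : Matrix (Fin n) (Fin m) ℤ)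
    (v : Fin m → ℤ) (u : Fin n → ℤ) :
    bform H (F *ᵥ v) u = v ⬝ᵥ ((Fᵀ * H) *ᵥ u) := by
  rw [bform, dot_trans, Matrix.mulVec_mulVec]

/-- Bezout: a vector not divisible by any nonunit admits a dual vector with dot product 1. -/
lemma exists_dot_eq_one {n : ℕ} (t : Fin n → ℤ)
    (h : ∀ (c : ℤ) (t' : Fin n → ℤ), t = c • t' → IsUnit c) :
    ∃ s : Fin n → ℤ, t ⬝ᵥ s = 1 := by
  set I : Ideal ℤ := Ideal.span (Set.range t) with hI
  obtain ⟨g, hg⟩ : Submodule.IsPrincipal I := inferInstance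
  have hgmem : g ∈ I := hg ▸ Submodule.mem_span_singleton_self g
  obtain ⟨c, hc⟩ := (Finsupp.mem_span_range_iff_exists_finsupp).mp hgmem
  have hdvd : ∀ i, g ∣ t i := fun i => by
    have : t i ∈ I := Ideal.subset_span (Set.mem_range_self i)
    rwa [hg, Ideal.submodule_span_eq, Ideal.mem_span_singleton] at this
  have hts : t = g • fun i => t i / g := by
    funext i
    simp only [Pi.smul_apply, smul_eq_mul]
    exact (Int.mul_ediv_cancel' (hdvd i)).symm
  have hu : IsUnit g := h g _ hts
  rcases Int.isUnit_iff.mp hu with h1 | h1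
  · refine ⟨fun i => c i, ?_⟩
    rw [dotProduct]
    calc ∑ i, t i * c i = ∑ i, c i • t i := by
          simp [mul_comm]
      _ = c.sum fun i a => a • t i := by
          rw [Finsupp.sum_fintype]; simp
      _ = 1 := by rw [hc, h1]
  · refine ⟨fun i => -(c i), ?_⟩
    rw [dotProduct]
    calc ∑ i, t i * -(c i) = -∑ i, c i • t i := by
          simp [mul_comm, Finset.sum_neg_distrib]
      _ = -(c.sum fun i a => a • t i) := by
          rw [Finsupp.sum_fintype]; simp
    rw [hc, h1]
    simp

lemma hPF : Pmat * FTmatᵀ = 1 := by decide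
lemma hGram : FTmat * LMat * FTmatᵀ = T3Mat := by decide
lemma hMR : FTmat * LMat * RTmatᵀ = 1 := by decide


/-- There is a primitive isometric embedding `j` of `U(2) ⊕ D₄(-1)` into
`L = U³ ⊕ E₈(-1)² ⊕ ⟨-2⟩` such that every primitive vector of the image has -/
theorem exists_primitive_embedding_U2D4_div_one :
    ∃ F : Matrix (Fin 23) (Fin 6) ℤ,
      IsPrimitiveIsometricEmb T3Mat LMat F ∧
      ∀ v : Fin 23 → ℤ, (∃ t : Fin 6 → ℤ, v = F *ᵥ t) →
        (∀ (c : ℤ) (w : Fin 23 → ℤ), v = c • w → IsUnit c) →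
        ∃ w : Fin 23 → ℤ, bform LMat v w = 1 := by
  refine ⟨FTmatᵀ, ⟨?_, ?_, ?_⟩, ?_⟩
  · -- injectivity
    intro x y hxy
    have : Pmat *ᵥ (FTmatᵀ *ᵥ x) = Pmat *ᵥ (FTmatᵀ *ᵥ y) := by rw [hxy]
    simpa [Matrix.mulVec_mulVec, hPF] using this
  · -- isometry
    intro v w
    rw [bform_mul, Matrix.transpose_transpose, bform, Matrix.mulVec_mulVec, hGram]
  · -- primitivity
    intro x c hc ⟨v, hv⟩
    refine ⟨Pmat *ᵥ x, ?_⟩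
    have hvv : v = c • (Pmat *ᵥ x) := by
      have h2 : Pmat *ᵥ (c • x) = Pmat *ᵥ (FTmatᵀ *ᵥ v) := by rw [hv]
      rw [Matrix.mulVec_smul, Matrix.mulVec_mulVec, hPF, Matrix.one_mulVec] at h2
      exact h2.symm
    rw [hvv, Matrix.mulVec_smul] at hv
    exact smul_right_injective (Fin 23 → ℤ) hc hv
  · -- divisibility one
    rintro v ⟨t, rfl⟩ hprim
    have ht : ∀ (c : ℤ) (t' : Fin 6 → ℤ), t = c • t' → IsUnit c := by
      intro c t' h
      exact hprim c (FTmatᵀ *ᵥ t') (by rw [h, Matrix.mulVec_smul])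
    obtain ⟨s, hs⟩ := exists_dot_eq_one t ht
    refine ⟨RTmatᵀ *ᵥ s, ?_⟩
    rw [bform_mul, Matrix.transpose_transpose, Matrix.mulVec_mulVec, hMR,
      Matrix.one_mulVec, hs]
end

section
/- Consider the map f : U ⊕ E₈(−2) → L := U^{⊕3} ⊕ E₈(−1)^{⊕2} ⊕ ⟨−2⟩ sending (u, x) to (u, 0, 0, x, x, 0), i.e. the identity of U onto the first U-summand, and E₈(−2) diagonally into E₈(−1) ⊕ E₈(−1) (using the identification of the underlying ℤ-module of E₈(−2) with that of E₈(−1)). Then f is a primitive isometric embedding, and every primitive vector v of the image f(U ⊕ E₈(−2)) has divisibility 1 in L, i.e. {⟨v,w⟩ : w ∈ L} = ℤ. -/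
open Matrix

/-- The matrix of the map `U ⊕ E₈(-2) → L = U³ ⊕ E₈(-1)² ⊕ ⟨-2⟩` sending
`(u, x)` to `(u, 0, 0, x, x, 0)`: the identity of `U` onto the first
`U`-summand (coordinates `0,1` of `L`), and `E₈(-2)` diagonally into
`E₈(-1) ⊕ E₈(-1)` (coordinates `6,…,13` and `14,…,21` of `L`). -/
def Fdiag : Matrix (Fin 23) (Fin 10) ℤ := fun i j =>
  if j.val < 2 then (if i.val = j.val then 1 else 0)
  else if i.val = j.val + 4 ∨ i.val = j.val + 12 then 1 else 0

/-- A left inverse of `Fdiag`: reads off `U`-coordinates and the first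
`E₈`-copy coordinates. -/
def Gmat : Matrix (Fin 10) (Fin 23) ℤ := fun j i =>
  if j.val < 2 then (if i.val = j.val then 1 else 0)
  else if i.val = j.val + 4 then 1 else 0

/-- The inverse of the `E₈` Cartan matrix (which is unimodular). -/
def E8Inv : Matrix (Fin 8) (Fin 8) ℤ :=
  !![4, 5, 7, 10, 8, 6, 4, 2;
     5, 8, 10, 15, 12, 9, 6, 3;
     7, 10, 14, 20, 16, 12, 8, 4;
     10, 15, 20, 30, 24, 18, 12, 6;
     8, 12, 16, 24, 20, 15, 10, 5;
     6, 9, 12, 18, 15, 12, 8, 4;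
     4, 6, 8, 12, 10, 8, 6, 3;
     2, 3, 4, 6, 5, 4, 3, 2]

/-- A "dual basis" matrix: `Fdiagᵀ * LMat * Wmat = 1`. -/
def Wmat : Matrix (Fin 23) (Fin 10) ℤ := fun i j =>
  if j.val < 2 then (if i.val = 1 - j.val then 1 else 0)
  else if h : 6 ≤ i.val ∧ i.val < 14 then
    -E8Inv ⟨i.val - 6, by omega⟩ ⟨j.val - 2, by omega⟩
  else 0

theorem Gmat_Fdiag : Gmat * Fdiag = 1 := by decide

theorem Fdiag_isometry : Fdiagᵀ * LMat * Fdiag = T2Mat := by decide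

theorem Fdiag_Wmat : Fdiagᵀ * LMat * Wmat = 1 := by decide

theorem bform_trans {m N : ℕ} (H : Matrix (Fin N) (Fin N) ℤ)
    (A B : Matrix (Fin N) (Fin m) ℤ) (v w : Fin m → ℤ) :
    bform H (A *ᵥ v) (B *ᵥ w) = bform (Aᵀ * H * B) v w := by
  unfold bform
  simp only [Matrix.mulVec_mulVec, Matrix.dotProduct_mulVec, Matrix.mul_assoc,
    ← Matrix.vecMul_vecMul, Matrix.vecMul_transpose]

/-- Bezout over a finite index set in `ℤ`. -/
theorem exists_bezout {ι : Type*} [DecidableEq ι] (s : Finset ι) (t : ι → ℤ) :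
    ∃ f : ι → ℤ, ∑ i ∈ s, f i * t i = s.gcd t := by
  classical
  induction s using Finset.induction_on with
  | empty => exact ⟨0, by simp⟩
  | @insert a s ha ih =>
    obtain ⟨f, hf⟩ := ih
    refine ⟨fun i => if i = a then Int.gcdA (t a) (s.gcd t)
      else Int.gcdB (t a) (s.gcd t) * f i, ?_⟩
    rw [Finset.sum_insert ha, Finset.gcd_insert]
    have h1 : ∑ i ∈ s, (if i = a then Int.gcdA (t a) (s.gcd t)
        else Int.gcdB (t a) (s.gcd t) * f i) * t i
        = Int.gcdB (t a) (s.gcd t) * ∑ i ∈ s, f i * t i := by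
      rw [Finset.mul_sum]
      refine Finset.sum_congr rfl fun i hi => ?_
      rw [if_neg (by rintro rfl; exact ha hi), mul_assoc]
    beta_reduce
    rw [if_pos rfl, h1, hf]
    have := Int.gcd_eq_gcd_ab (t a) (s.gcd t)
    have hg : gcd (t a) (s.gcd t) = (Int.gcd (t a) (s.gcd t) : ℤ) := (Int.coe_gcd _ _).symm
    rw [hg, this]; ring

/-- The map `(u, x) ↦ (u, 0, 0, x, x, 0)` is a primitive isometric embedding of
`U ⊕ E₈(-2)` into `L = U³ ⊕ E₈(-1)² ⊕ ⟨-2⟩`, and every primitive vector of its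
image has divisibility `1` in `L`. -/
theorem diag_embedding_UE8_primitive_div_one :
    IsPrimitiveIsometricEmb T2Mat LMat Fdiag ∧
    ∀ v : Fin 23 → ℤ, (∃ t : Fin 10 → ℤ, v = Fdiag *ᵥ t) →
      (∀ (c : ℤ) (w : Fin 23 → ℤ), v = c • w → IsUnit c) →
      ∃ w : Fin 23 → ℤ, bform LMat v w = 1 := by
  have hGF : ∀ t : Fin 10 → ℤ, Gmat *ᵥ (Fdiag *ᵥ t) = t := by
    intro t
    rw [Matrix.mulVec_mulVec, Gmat_Fdiag, Matrix.one_mulVec]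
  constructor
  · refine ⟨?_, ?_, ?_⟩
    · intro a b h
      have := congrArg (Gmat *ᵥ ·) h
      simpa [hGF] using this
    · intro v w
      rw [bform_trans, Fdiag_isometry]
    · rintro x c hc ⟨v, hv⟩
      refine ⟨Gmat *ᵥ x, ?_⟩
      have hv' : v = c • (Gmat *ᵥ x) := by
        rw [← Matrix.mulVec_smul, hv, hGF]
      have : c • x = c • (Fdiag *ᵥ (Gmat *ᵥ x)) := by
        rw [hv, hv', Matrix.mulVec_smul]
      exact smul_right_injective (Fin 23 → ℤ) hc this
  · rintro v ⟨t, rfl⟩ hprim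
    -- gcd of the entries of t is a unit
    set g : ℤ := Finset.gcd Finset.univ t with hg
    have hdvd : ∀ i, g ∣ t i := fun i => Finset.gcd_dvd (Finset.mem_univ i)
    have ht : t = g • fun i => t i / g := by
      funext i
      simp only [Pi.smul_apply, smul_eq_mul]
      exact (Int.mul_ediv_cancel' (hdvd i)).symm
    have hunit : IsUnit g := by
      refine hprim g (Fdiag *ᵥ fun i => t i / g) ?_
      rw [ht]
      rw [Matrix.mulVec_smul]
      rw [← ht]
    -- Bezout coefficients
    obtain ⟨f, hf⟩ := exists_bezout (Finset.univ : Finset (Fin 10)) t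
    rw [← hg] at hf
    have key : ∀ f' : Fin 10 → ℤ, bform LMat (Fdiag *ᵥ t) (Wmat *ᵥ f') = ∑ i, f' i * t i := by
      intro f'
      rw [bform_trans, Fdiag_Wmat]
      simp [bform, Matrix.one_mulVec, dotProduct, mul_comm]
    rcases Int.isUnit_iff.mp hunit with h1 | h1
    · exact ⟨Wmat *ᵥ f, by rw [key, hf, h1]⟩
    · refine ⟨Wmat *ᵥ (-f), ?_⟩
      rw [key]
      simp only [Pi.neg_apply, neg_mul]
      rw [Finset.sum_neg_distrib, hf, h1]
      norm_num
end
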